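/- Let c : [0,1] → [0,1] be L-Lipschitz, let N be a power of 2, and let D = {(x,k) ∈ [0,N)² : k < N·c(x/N)}. In the dyadic quadtree decomposition of D (boxes fully inside D kept, boxes intersecting the boundary subdivided), the number of retained boxes of side length s is at most C·(L+1)·N/s for an absolute constant C. -/

import Mathlib

open Set

lemma quadtree_aux (L : ℝ) (hL : 0 ≤ L) (c : ℝ → ℝ)
    (hc : LipschitzOnWith (Real.toNNReal L) c (Set.Icc (0:ℝ) 1))
    (N s M : ℕ) (hs : 0 < s) (hMN : N = M * s)
    (D : Set (ℝ × ℝ))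
    (hD : D = {p : ℝ × ℝ | 0 ≤ p.1 ∧ p.1 < N ∧ 0 ≤ p.2 ∧ p.2 < N * c (p.1 / N)})
    (i j j' : ℕ) (hpar : 2 * (i / 2) + 2 ≤ M)
    (hiN : i * s < N)
    (hbox : (Set.Ico ((i : ℝ) * s) ((i + 1 : ℕ) * s) ×ˢ
            Set.Ico ((j' : ℝ) * s) ((j' + 1 : ℕ) * s)) ⊆ D)
    (hnpar : ¬ (Set.Ico (((2 * (i / 2) : ℕ) : ℝ) * s) (((2 * (i / 2) + 2 : ℕ) : ℝ) * s) ×ˢ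
             Set.Ico (((2 * (j / 2) : ℕ) : ℝ) * s) (((2 * (j / 2) + 2 : ℕ) : ℝ) * s)) ⊆ D) :
    (j' : ℝ) < j + 2 + 2 * L := by
  have hs' : (0:ℝ) < s := by exact_mod_cast hs
  have hN : 0 < N := lt_of_le_of_lt (Nat.zero_le _) hiN
  have hN' : (0:ℝ) < N := by exact_mod_cast hN
  set a := i / 2 with ha
  set b := j / 2 with hb
  have hia : 2 * a ≤ i ∧ i ≤ 2 * a + 1 := by constructor <;> omega
  have hjb : 2 * b ≤ j := by omega
  -- point in the box
  have hp0 : ((i : ℝ) * s, (j' : ℝ) * s) ∈ D := by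
    apply hbox
    constructor <;> constructor
    · exact le_refl _
    · push_cast; nlinarith
    · exact le_refl _
    · push_cast; nlinarith
  rw [hD] at hp0
  obtain ⟨-, hxN, -, hbox'⟩ := hp0
  have hbox'' : (j' : ℝ) * s < (N : ℝ) * c ((i : ℝ) * s / N) := hbox'
  -- point in the parent outside D
  obtain ⟨p, hp, hpD⟩ := Set.not_subset.mp hnpar
  obtain ⟨⟨hp11, hp12⟩, hp21, hp22⟩ := hp
  rw [hD] at hpD
  have hp1_nonneg : (0:ℝ) ≤ p.1 := le_trans (by positivity) hp11
  have hp1N : p.1 < (N : ℝ) := by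
    have h2 : ((2 * a + 2 : ℕ) : ℝ) * s ≤ (N : ℝ) := by
      have h3 : ((2 * a + 2) * s : ℕ) ≤ (M * s : ℕ) := Nat.mul_le_mul_right _ hpar
      rw [hMN]; exact_mod_cast h3
    linarith
  have hp2_nonneg : (0:ℝ) ≤ p.2 := le_trans (by positivity) hp21
  have hkey : (N : ℝ) * c (p.1 / N) ≤ p.2 := by
    by_contra h
    push_neg at h
    exact hpD ⟨hp1_nonneg, hp1N, hp2_nonneg, h⟩
  -- Lipschitz estimate
  have hx_mem : (i : ℝ) * s / N ∈ Set.Icc (0:ℝ) 1 := by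
    constructor
    · positivity
    · rw [div_le_one hN']
      exact_mod_cast hiN.le
  have hy_mem : p.1 / N ∈ Set.Icc (0:ℝ) 1 := by
    constructor
    · positivity
    · rw [div_le_one hN']; exact hp1N.le
  have hdist := hc.dist_le_mul _ hx_mem _ hy_mem
  rw [Real.dist_eq, Real.dist_eq, Real.coe_toNNReal _ hL] at hdist
  have hxy : |(i : ℝ) * s - p.1| ≤ 2 * s := by
    rw [abs_le]
    have h1 : ((2 * a : ℕ) : ℝ) * s ≤ (i : ℝ) * s := by
      have : ((2:ℝ) * a) ≤ i := by exact_mod_cast hia.1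
      push_cast
      nlinarith
    have h2 : (i : ℝ) * s ≤ ((2 * a : ℕ) : ℝ) * s + s := by
      have : (i : ℝ) ≤ 2 * a + 1 := by exact_mod_cast hia.2
      push_cast
      nlinarith
    have h3 : p.1 < ((2 * a : ℕ) : ℝ) * s + 2 * s := by
      push_cast at hp12 ⊢; linarith
    constructor <;> linarith
  have habs : |(i : ℝ) * s / N - p.1 / N| = |(i : ℝ) * s - p.1| / N := by
    rw [div_sub_div_same, abs_div, abs_of_pos hN']
  rw [habs] at hdist
  have h6 : c ((i : ℝ) * s / N) - c (p.1 / N) ≤ L * (|(i : ℝ) * s - p.1| / N) :=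
    (le_abs_self _).trans hdist
  have h8 : L * (|(i : ℝ) * s - p.1| / N) * N = L * |(i : ℝ) * s - p.1| := by
    field_simp
  have h9 : (c ((i : ℝ) * s / N) - c (p.1 / N)) * N ≤ L * |(i : ℝ) * s - p.1| := by
    calc (c ((i : ℝ) * s / N) - c (p.1 / N)) * N
        ≤ L * (|(i : ℝ) * s - p.1| / N) * N := mul_le_mul_of_nonneg_right h6 hN'.le
      _ = L * |(i : ℝ) * s - p.1| := h8
  have h10 : L * |(i : ℝ) * s - p.1| ≤ L * (2 * s) := mul_le_mul_of_nonneg_left hxy hL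
  have hjb' : (2 * (b : ℝ)) ≤ (j : ℝ) := by exact_mod_cast hjb
  have hp22' : p.2 < (2 * (b:ℝ) + 2) * s := by push_cast at hp22; linarith
  have h12 : (2 * (b:ℝ) + 2) * s ≤ ((j : ℝ) + 2) * s :=
    mul_le_mul_of_nonneg_right (by linarith) hs'.le
  have h11 : (j' : ℝ) * s < ((j : ℝ) + 2 + 2 * L) * s := by linarith
  have := lt_of_mul_lt_mul_right h11 hs'.le
  linarith

/-- In the dyadic quadtree decomposition of the subgraph region
`D = {(x,k) ∈ [0,N)² : k < N·c(x/N)}` of an `L`-Lipschitz function `c`, the number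
of retained boxes of side length `s` (boxes fully inside `D` whose parent box of
side `2s` is not fully inside `D`) is at most `C·(L+1)·N/s` for an absolute
constant `C`. -/
theorem quadtree_box_count_bound :
    ∃ C : ℝ, 0 < C ∧
      ∀ (L : ℝ), 0 ≤ L →
      ∀ (c : ℝ → ℝ), LipschitzOnWith (Real.toNNReal L) c (Set.Icc (0:ℝ) 1) →
        (∀ t ∈ Set.Icc (0:ℝ) 1, c t ∈ Set.Icc (0:ℝ) 1) →
      ∀ (N : ℕ), (∃ n : ℕ, N = 2 ^ n) →
      ∀ (s : ℕ), (∃ j : ℕ, s = 2 ^ j) → s ∣ N → 0 < s →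
      ∀ (D : Set (ℝ × ℝ)),
        D = {p : ℝ × ℝ | 0 ≤ p.1 ∧ p.1 < N ∧ 0 ≤ p.2 ∧ p.2 < N * c (p.1 / N)} →
      ({ij : ℕ × ℕ |
          ij.1 * s < N ∧ ij.2 * s < N ∧
          (Set.Ico ((ij.1 : ℝ) * s) ((ij.1 + 1 : ℕ) * s) ×ˢ
            Set.Ico ((ij.2 : ℝ) * s) ((ij.2 + 1 : ℕ) * s)) ⊆ D ∧
          ¬ (Set.Ico (((2 * (ij.1 / 2) : ℕ) : ℝ) * s) (((2 * (ij.1 / 2) + 2 : ℕ) : ℝ) * s) ×ˢ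
             Set.Ico (((2 * (ij.2 / 2) : ℕ) : ℝ) * s) (((2 * (ij.2 / 2) + 2 : ℕ) : ℝ) * s)) ⊆ D
        }).ncard ≤ C * (L + 1) * N / s := by
  refine ⟨4, by norm_num, ?_⟩
  intro L hL c hc hc01 N hN2 s _ hsN hs D hD
  classical
  obtain ⟨M, hM⟩ := hsN
  have hMN : N = M * s := by rw [hM, Nat.mul_comm]
  have hN0 : 0 < N := by obtain ⟨n, rfl⟩ := hN2; positivity
  have hM0 : 0 < M := by
    rcases Nat.eq_zero_or_pos M with h | h
    · subst h; simp at hMN; omega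
    · exact h
  set S : Set (ℕ × ℕ) := {ij : ℕ × ℕ |
          ij.1 * s < N ∧ ij.2 * s < N ∧
          (Set.Ico ((ij.1 : ℝ) * s) ((ij.1 + 1 : ℕ) * s) ×ˢ
            Set.Ico ((ij.2 : ℝ) * s) ((ij.2 + 1 : ℕ) * s)) ⊆ D ∧
          ¬ (Set.Ico (((2 * (ij.1 / 2) : ℕ) : ℝ) * s) (((2 * (ij.1 / 2) + 2 : ℕ) : ℝ) * s) ×ˢ
             Set.Ico (((2 * (ij.2 / 2) : ℕ) : ℝ) * s) (((2 * (ij.2 / 2) + 2 : ℕ) : ℝ) * s)) ⊆ D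
        } with hSdef
  set T : Finset (ℕ × ℕ) :=
    (Finset.range M ×ˢ Finset.range M).filter (fun p => p ∈ S) with hTdef
  have hTmem : ∀ p : ℕ × ℕ, p ∈ T ↔ p ∈ S := by
    intro p
    simp only [hTdef, Finset.mem_filter, Finset.mem_product, Finset.mem_range]
    refine ⟨fun h => h.2, fun h => ⟨⟨?_, ?_⟩, h⟩⟩
    · exact lt_of_mul_lt_mul_right (hMN ▸ h.1) (Nat.zero_le s)
    · exact lt_of_mul_lt_mul_right (hMN ▸ h.2.1) (Nat.zero_le s)
  have hS : S = ↑T := by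
    ext p
    rw [Finset.mem_coe, hTmem]
  rw [hS, Set.ncard_coe_finset]
  set K : ℕ := Nat.ceil (2 * L) + 2 with hK
  -- fiber bound for non-boundary columns
  have fiber_le_K : ∀ i, 2 * (i / 2) + 2 ≤ M →
      (T.filter (fun p => p.1 = i)).card ≤ K := by
    intro i hi
    set F := T.filter (fun p => p.1 = i) with hF
    rcases F.eq_empty_or_nonempty with h | h
    · simp [h]
    · set J := F.image Prod.snd with hJ
      have hJne : J.Nonempty := h.image _
      set m := J.min' hJne with hm
      have hmem : ∀ jx ∈ J, (i, jx) ∈ S := by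
        intro jx hjx
        rw [hJ, Finset.mem_image] at hjx
        obtain ⟨p, hpF, hpsnd⟩ := hjx
        rw [hF, Finset.mem_filter] at hpF
        have hpe : p = (i, jx) := Prod.ext hpF.2 hpsnd
        rw [← hpe]
        exact (hTmem p).mp hpF.1
      have hmS := hmem m (J.min'_mem hJne)
      have hsubJ : J ⊆ Finset.Ico m (m + K) := by
        intro jx hjx
        have hjxS := hmem jx hjx
        have hlt : (jx : ℝ) < (m : ℝ) + 2 + 2 * L :=
          quadtree_aux L hL c hc N s M hs hMN D hD i m jx hi hjxS.1
            hjxS.2.2.1 hmS.2.2.2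
        have hceil : 2 * L ≤ (Nat.ceil (2 * L) : ℝ) := Nat.le_ceil _
        have hlt2 : (jx : ℝ) < ((m + K : ℕ) : ℝ) := by
          push_cast [hK]; linarith
        exact Finset.mem_Ico.mpr ⟨J.min'_le jx hjx, by exact_mod_cast hlt2⟩
      have hinj : Set.InjOn (Prod.snd : ℕ × ℕ → ℕ) (F : Set (ℕ × ℕ)) := by
        intro p hp q hq hpq
        rw [Finset.mem_coe, hF, Finset.mem_filter] at hp hq
        exact Prod.ext (hp.2.trans hq.2.symm) hpq
      calc F.card = J.card := (Finset.card_image_of_injOn hinj).symm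
        _ ≤ (Finset.Ico m (m + K)).card := Finset.card_le_card hsubJ
        _ = K := by simp
  -- trivial fiber bound
  have fiber_le_M : ∀ i, (T.filter (fun p => p.1 = i)).card ≤ M := by
    intro i
    set F := T.filter (fun p => p.1 = i) with hF
    have hinj : Set.InjOn (Prod.snd : ℕ × ℕ → ℕ) (F : Set (ℕ × ℕ)) := by
      intro p hp q hq hpq
      rw [Finset.mem_coe, hF, Finset.mem_filter] at hp hq
      exact Prod.ext (hp.2.trans hq.2.symm) hpq
    calc F.card = (F.image Prod.snd).card := (Finset.card_image_of_injOn hinj).symm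
      _ ≤ (Finset.range M).card := by
          apply Finset.card_le_card
          intro jx hjx
          rw [Finset.mem_image] at hjx
          obtain ⟨p, hpF, hpsnd⟩ := hjx
          rw [hF, Finset.mem_filter, hTdef, Finset.mem_filter, Finset.mem_product] at hpF
          rw [Finset.mem_range, ← hpsnd]
          exact Finset.mem_range.mp hpF.1.1.2
      _ = M := by simp
  -- total count
  have hcount : T.card ≤ M * K + M := by
    have hmap : ∀ p ∈ T, p.1 ∈ Finset.range M := by
      intro p hp
      rw [hTdef, Finset.mem_filter, Finset.mem_product] at hp
      exact hp.1.1
    rw [Finset.card_eq_sum_card_fiberwise hmap]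
    have hMm : M - 1 ∈ Finset.range M := Finset.mem_range.mpr (Nat.sub_lt hM0 one_pos)
    rw [← Finset.sum_erase_add _ _ hMm]
    have h1 : ∑ x ∈ (Finset.range M).erase (M - 1),
        (T.filter (fun p => p.1 = x)).card ≤ ((Finset.range M).erase (M - 1)).card * K := by
      apply Finset.sum_le_card_nsmul
      intro x hx
      rw [Finset.mem_erase, Finset.mem_range] at hx
      exact fiber_le_K x (by omega)
    have h2 : ((Finset.range M).erase (M - 1)).card ≤ M := by
      calc ((Finset.range M).erase (M - 1)).card ≤ (Finset.range M).card :=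
            Finset.card_le_card (Finset.erase_subset _ _)
        _ = M := by simp
    have h3 := fiber_le_M (M - 1)
    calc ∑ x ∈ (Finset.range M).erase (M - 1), (T.filter (fun p => p.1 = x)).card
          + (T.filter (fun p => p.1 = M - 1)).card
        ≤ ((Finset.range M).erase (M - 1)).card * K + M := by omega
      _ ≤ M * K + M := by
          have := Nat.mul_le_mul_right K h2
          omega
  -- conclude
  have hs' : (0:ℝ) < s := by exact_mod_cast hs
  have hNs : 4 * (L + 1) * (N : ℝ) / s = 4 * (L + 1) * M := by
    rw [hMN]
    push_cast
    field_simp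
  rw [hNs]
  have hcast : (T.card : ℝ) ≤ (M : ℝ) * K + M := by exact_mod_cast hcount
  have hKle : (K : ℝ) ≤ 2 * L + 3 := by
    have h4 : (Nat.ceil (2 * L) : ℝ) < 2 * L + 1 :=
      Nat.ceil_lt_add_one (by positivity)
    push_cast [hK]
    linarith
  have hMnn : (0:ℝ) ≤ (M : ℝ) := Nat.cast_nonneg _
  nlinarith [mul_le_mul_of_nonneg_left hKle hMnn]
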